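/- Let (ℱ, v) be unitary in x (v(t) = λ ≠ 0 for all t ∈ ℱ_x), let P be a triangulation point of G(ℱ_x), Q_2 a leaf at P with Q_2 ∉ {x−2, x+2}, and Q_1, Q_3 the previous and next leaves at P (or the adjacent triangulation points if no such leaves exist). Then v({P,Q_1,Q_3}) = v({P,Q_1,Q_2}) + v({P,Q_2,Q_3}). -/

import Mathlib

open Finset

/-- `(a,b,c)` is cyclically ordered in `Fin n`. -/
def Cyc {n : ℕ} (a b c : Fin n) : Prop :=
  (a < b ∧ b < c) ∨ (b < c ∧ c < a) ∨ (c < a ∧ a < b)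

/-- `a <_x b` iff `(x,a,b)` is cyclically ordered. -/
def Ltx {n : ℕ} (x a b : Fin n) : Prop := Cyc x a b

/-- `a ≤_x b`. -/
def Leqx {n : ℕ} (x a b : Fin n) : Prop := Ltx x a b ∨ a = b

/-- Two subsets `A`, `B` of `Fin n` are crossing. -/
def Crossing {n : ℕ} (A B : Finset (Fin n)) : Prop :=
  ∃ a ∈ A \ B, ∃ c ∈ A \ B, ∃ b ∈ B \ A, ∃ d ∈ B \ A, Cyc a b c ∧ Cyc b c d

/-- `F` is a maximal weakly separated family of triangles in `Fin n`. -/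
def MaxWS {n : ℕ} (F : Finset (Finset (Fin n))) : Prop :=
  (∀ t ∈ F, t.card = 3) ∧
  (∀ s ∈ F, ∀ t ∈ F, ¬ Crossing s t) ∧
  (∀ t : Finset (Fin n), t.card = 3 →
    (∀ s ∈ F, ¬ Crossing t s ∧ ¬ Crossing s t) → t ∈ F)

/-- The subfamily of triangles of `F` containing `x`. -/
def Fx {n : ℕ} (F : Finset (Finset (Fin n))) (x : Fin n) : Finset (Finset (Fin n)) :=
  F.filter (fun t => x ∈ t)

/-- Degree of `a` in the graph `G(F_x)`: the number of triangles of `F`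
containing both `x` and `a`. -/
def degx {n : ℕ} (F : Finset (Finset (Fin n))) (x a : Fin n) : ℕ :=
  ((Fx F x).filter (fun t => a ∈ t)).card

/-- `a` is a vertex of the graph `G(F_x)`. -/
def IsVertex {n : ℕ} (F : Finset (Finset (Fin n))) (x a : Fin n) : Prop :=
  a ≠ x ∧ 1 ≤ degx F x a

/-- `a` is a triangulation point of `G(F_x)`: a vertex of degree at least 2. -/
def IsTriPoint {n : ℕ} (F : Finset (Finset (Fin n))) (x a : Fin n) : Prop :=
  a ≠ x ∧ 2 ≤ degx F x a

/-- `a` is a leaf of `G(F_x)` attached to `b`. -/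
def IsLeafAt {n : ℕ} (F : Finset (Finset (Fin n))) (x a b : Fin n) : Prop :=
  a ≠ x ∧ degx F x a = 1 ∧ ({x, b, a} : Finset (Fin n)) ∈ F

/-- A graph with vertex set `V ⊆ Fin n` (in the induced cyclic order) and edge
set `E` is a triangulation of a polygon: equivalently (as noted in the paper),
`E` is a maximal family of pairwise non-crossing 2-subsets of `V`. -/
def IsPolygonTriangulation {n : ℕ} (V : Set (Fin n)) (E : Set (Finset (Fin n))) : Prop :=
  (∀ e ∈ E, e.card = 2 ∧ ↑e ⊆ V) ∧
  (∀ e ∈ E, ∀ f ∈ E, ¬ Crossing e f) ∧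
  (∀ e : Finset (Fin n), e.card = 2 → ↑e ⊆ V →
    (∀ f ∈ E, ¬ Crossing e f ∧ ¬ Crossing f e) → e ∈ E)

/-- The Plücker ideal: alternating relations together with the Plücker relations. -/
noncomputable def plueckerIdeal (n : ℕ) : Ideal (MvPolynomial (Fin 3 → Fin n) ℂ) :=
  Ideal.span { p | (∃ (f : Fin 3 → Fin n) (σ : Equiv.Perm (Fin 3)),
      p = MvPolynomial.X (f ∘ σ) - ((Equiv.Perm.sign σ : ℤˣ) : ℤ) • MvPolynomial.X f) ∨
    (∃ (g : Fin 2 → Fin n) (h : Fin 4 → Fin n),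
      p = ∑ l : Fin 4, (-1 : MvPolynomial (Fin 3 → Fin n) ℂ) ^ (l : ℕ) *
        MvPolynomial.X ![g 0, g 1, h l] * MvPolynomial.X (h ∘ l.succAbove)) }

/-- The homogeneous coordinate ring `ℂ[G(3,n)]` of the Grassmannian. -/
abbrev GrassRing (n : ℕ) := MvPolynomial (Fin 3 → Fin n) ℂ ⧸ plueckerIdeal n

/-- The Plücker coordinate `Δ^{ijk}`. -/
noncomputable def Pl {n : ℕ} (i j k : Fin n) : GrassRing n :=
  Ideal.Quotient.mk _ (MvPolynomial.X ![i, j, k])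

/-- Median of three elements of `Fin n`. -/
def mid3 {n : ℕ} (i j k : Fin n) : Fin n := max (min i j) (min (max i j) k)

/-- The Plücker coordinate `Δ^{o(i,j,k)}` with the indices ordered increasingly. -/
noncomputable def Plo {n : ℕ} (i j k : Fin n) : GrassRing n :=
  Pl (min i (min j k)) (mid3 i j k) (max i (max j k))

open Fin.NatCast in
/-- `Δ_k(i) = v(Δ at {i, i+1, i+k+2})`. -/
noncomputable def Dlow {n : ℕ} [NeZero n] (v : GrassRing n →ₐ[ℂ] ℂ) (k : ℕ) (i : Fin n) : ℂ :=
  v (Plo i (i + 1) (i + ((k + 2 : ℕ) : Fin n)))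

open Fin.NatCast in
/-- `Δ^k(i) = v(Δ at {i, i+k+1, i+k+2})`. -/
noncomputable def Dup {n : ℕ} [NeZero n] (v : GrassRing n →ₐ[ℂ] ℂ) (k : ℕ) (i : Fin n) : ℂ :=
  v (Plo i (i + ((k + 1 : ℕ) : Fin n)) (i + ((k + 2 : ℕ) : Fin n)))


section Aux

lemma pl_alt {n : ℕ} (f : Fin 3 → Fin n) (σ : Equiv.Perm (Fin 3)) :
    (Ideal.Quotient.mk (plueckerIdeal n) (MvPolynomial.X (f ∘ σ))) =
      ((Equiv.Perm.sign σ : ℤˣ) : ℤ) • Ideal.Quotient.mk (plueckerIdeal n) (MvPolynomial.X f) := by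
  have hmem : (MvPolynomial.X (f ∘ σ) - ((Equiv.Perm.sign σ : ℤˣ) : ℤ) • MvPolynomial.X f)
      ∈ plueckerIdeal n := Ideal.subset_span (Or.inl ⟨f, σ, rfl⟩)
  have h := (Ideal.Quotient.eq_zero_iff_mem).2 hmem
  rw [map_sub] at h
  exact sub_eq_zero.mp h

lemma pl_swap01 {n : ℕ} (i j k : Fin n) : Pl j i k = - Pl i j k := by
  have h := pl_alt ![i, j, k] (Equiv.swap 0 1)
  have hf : (![i, j, k] ∘ (Equiv.swap (0:Fin 3) 1)) = ![j, i, k] := by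
    ext l; fin_cases l <;> simp [Equiv.swap_apply_def]
  have hs : (Equiv.Perm.sign (Equiv.swap (0:Fin 3) 1)) = -1 := by decide
  rw [hf, hs] at h
  simpa [Pl] using h

lemma pl_swap12 {n : ℕ} (i j k : Fin n) : Pl i k j = - Pl i j k := by
  have h := pl_alt ![i, j, k] (Equiv.swap 1 2)
  have hf : (![i, j, k] ∘ (Equiv.swap (1:Fin 3) 2)) = ![i, k, j] := by
    ext l; fin_cases l <;> simp [Equiv.swap_apply_def]
  have hs : (Equiv.Perm.sign (Equiv.swap (1:Fin 3) 2)) = -1 := by decide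
  rw [hf, hs] at h
  simpa [Pl] using h

lemma pl_cycle {n : ℕ} (i j k : Fin n) : Pl i j k = Pl j k i := by
  rw [show Pl j k i = - Pl j i k from pl_swap12 j i k, show Pl j i k = - Pl i j k from pl_swap01 i j k]
  ring

lemma pl_deg {n : ℕ} (i j : Fin n) : Pl i j i = 0 := by
  have h := pl_alt ![i, j, i] (Equiv.swap 0 2)
  have hf : (![i, j, i] ∘ (Equiv.swap (0:Fin 3) 2)) = ![i, j, i] := by
    ext l; fin_cases l <;> simp [Equiv.swap_apply_def]
  have hs : (Equiv.Perm.sign (Equiv.swap (0:Fin 3) 2)) = -1 := by decide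
  rw [hf, hs] at h
  have hneg : Pl i j i = - Pl i j i := by simpa [Pl] using h
  have h2 : (2 : ℂ) • (Pl i j i) = 0 := by
    rw [two_smul]; linear_combination hneg
  have h3 := smul_smul ((2:ℂ)⁻¹) (2:ℂ) (Pl i j i)
  rw [h2] at h3
  simpa using h3.symm

lemma pl_rel {n : ℕ} (p a b c d : Fin n) :
    Pl p a b * Pl p c d - Pl p a c * Pl p b d + Pl p a d * Pl p b c = 0 := by
  have hmem : (∑ l : Fin 4, (-1 : MvPolynomial (Fin 3 → Fin n) ℂ) ^ (l : ℕ) *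
        MvPolynomial.X ![(![p, a] : Fin 2 → Fin n) 0, (![p, a] : Fin 2 → Fin n) 1,
          (![p, b, c, d] : Fin 4 → Fin n) l] *
        MvPolynomial.X ((![p, b, c, d] : Fin 4 → Fin n) ∘ l.succAbove)) ∈ plueckerIdeal n :=
    Ideal.subset_span (Or.inr ⟨![p, a], ![p, b, c, d], rfl⟩)
  have h0 := (Ideal.Quotient.eq_zero_iff_mem).2 hmem
  rw [Fin.sum_univ_four] at h0
  have e0 : ((![p, b, c, d] : Fin 4 → Fin n) ∘ (0 : Fin 4).succAbove) = ![b, c, d] := by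
    ext l; fin_cases l <;> rfl
  have e1 : ((![p, b, c, d] : Fin 4 → Fin n) ∘ (1 : Fin 4).succAbove) = ![p, c, d] := by
    ext l; fin_cases l <;> rfl
  have e2 : ((![p, b, c, d] : Fin 4 → Fin n) ∘ (2 : Fin 4).succAbove) = ![p, b, d] := by
    ext l; fin_cases l <;> rfl
  have e3 : ((![p, b, c, d] : Fin 4 → Fin n) ∘ (3 : Fin 4).succAbove) = ![p, b, c] := by
    ext l; fin_cases l <;> rfl
  rw [e0, e1, e2, e3] at h0
  have v0 : (((0:Fin 4)):ℕ) = 0 := rfl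
  have v1 : (((1:Fin 4)):ℕ) = 1 := rfl
  have v2 : (((2:Fin 4)):ℕ) = 2 := rfl
  have v3 : (((3:Fin 4)):ℕ) = 3 := rfl
  have w2 : (![p, b, c, d] : Fin 4 → Fin n) 2 = c := rfl
  have w3 : (![p, b, c, d] : Fin 4 → Fin n) 3 = d := rfl
  simp only [map_add, map_mul, map_pow, map_neg, map_one, Matrix.cons_val_zero,
    Matrix.cons_val_one, Matrix.head_cons, v0, v1, v2, v3, w2, w3,
    pow_zero, pow_one, pow_succ] at h0
  have hz : Pl p a p = 0 := pl_deg p a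
  simp only [Pl] at hz ⊢
  linear_combination -h0 + (Ideal.Quotient.mk (plueckerIdeal n) (MvPolynomial.X ![b,c,d])) * hz

lemma plo_sorted {n : ℕ} {a b c : Fin n} (h1 : a ≤ b) (h2 : b ≤ c) : Plo a b c = Pl a b c := by
  unfold Plo
  rw [show min a (min b c) = a by simp only [min_def]; split_ifs <;> omega,
    show mid3 a b c = b by simp only [mid3, min_def, max_def]; split_ifs <;> omega,
    show max a (max b c) = c by simp only [max_def]; split_ifs <;> omega]

lemma plo_pos {n : ℕ} {a b c : Fin n} (h : Cyc a b c) : Plo a b c = Pl a b c := by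
  rcases h with ⟨h1, h2⟩ | ⟨h1, h2⟩ | ⟨h1, h2⟩
  · exact plo_sorted h1.le h2.le
  · unfold Plo
    rw [show min a (min b c) = b by simp only [min_def]; split_ifs <;> omega,
      show mid3 a b c = c by simp only [mid3, min_def, max_def]; split_ifs <;> omega,
      show max a (max b c) = a by simp only [max_def]; split_ifs <;> omega]
    rw [pl_cycle a b c]
  · unfold Plo
    rw [show min a (min b c) = c by simp only [min_def]; split_ifs <;> omega,
      show mid3 a b c = a by simp only [mid3, min_def, max_def]; split_ifs <;> omega,
      show max a (max b c) = b by simp only [max_def]; split_ifs <;> omega]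
    rw [pl_cycle a b c, pl_cycle b c a]

lemma plo_neg {n : ℕ} {a b c : Fin n} (h : Cyc a c b) : Plo a b c = - Pl a b c := by
  rcases h with ⟨h1, h2⟩ | ⟨h1, h2⟩ | ⟨h1, h2⟩
  · -- a < c < b : sorted a c b
    unfold Plo
    rw [show min a (min b c) = a by simp only [min_def]; split_ifs <;> omega,
      show mid3 a b c = c by simp only [mid3, min_def, max_def]; split_ifs <;> omega,
      show max a (max b c) = b by simp only [max_def]; split_ifs <;> omega]
    exact pl_swap12 a b c
  · -- c < b < a : sorted c b a
    unfold Plo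
    rw [show min a (min b c) = c by simp only [min_def]; split_ifs <;> omega,
      show mid3 a b c = b by simp only [mid3, min_def, max_def]; split_ifs <;> omega,
      show max a (max b c) = a by simp only [max_def]; split_ifs <;> omega]
    rw [show Pl c b a = Pl b a c from pl_cycle c b a]
    exact pl_swap01 a b c
  · -- b < a < c : sorted b a c
    unfold Plo
    rw [show min a (min b c) = b by simp only [min_def]; split_ifs <;> omega,
      show mid3 a b c = a by simp only [mid3, min_def, max_def]; split_ifs <;> omega,
      show max a (max b c) = c by simp only [max_def]; split_ifs <;> omega]
    exact pl_swap01 a b c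

lemma plo_comm1 {n : ℕ} (a b c : Fin n) : Plo a b c = Plo b a c := by
  unfold Plo
  rw [show min a (min b c) = min b (min a c) by simp only [min_def]; split_ifs <;> omega,
    show mid3 a b c = mid3 b a c by simp only [mid3, min_def, max_def]; split_ifs <;> omega,
    show max a (max b c) = max b (max a c) by simp only [max_def]; split_ifs <;> omega]

set_option maxHeartbeats 1000000 in
lemma plo_rel5 {n : ℕ} (p a b c d : Fin n)
    (hpa : p ≠ a) (hpb : p ≠ b) (hpc : p ≠ c) (hpd : p ≠ d)
    (h1 : Cyc a b c) (h2 : Cyc a c d) :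
    Plo p a c * Plo p b d = Plo p a b * Plo p c d + Plo p a d * Plo p b c := by
  have harc : Cyc a p b ∨ Cyc b p c ∨ Cyc c p d ∨ Cyc d p a := by
    unfold Cyc at h1 h2 ⊢; omega
  rcases harc with hc | hc | hc | hc
  · rw [plo_neg (show Cyc p c a by unfold Cyc at h1 h2 hc ⊢; omega),
      plo_pos (show Cyc p b d by unfold Cyc at h1 h2 hc ⊢; omega),
      plo_neg (show Cyc p b a by unfold Cyc at h1 h2 hc ⊢; omega),
      plo_pos (show Cyc p c d by unfold Cyc at h1 h2 hc ⊢; omega),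
      plo_neg (show Cyc p d a by unfold Cyc at h1 h2 hc ⊢; omega),
      plo_pos (show Cyc p b c by unfold Cyc at h1 h2 hc ⊢; omega)]
    linear_combination pl_rel p a b c d
  · rw [plo_neg (show Cyc p c a by unfold Cyc at h1 h2 hc ⊢; omega),
      plo_neg (show Cyc p d b by unfold Cyc at h1 h2 hc ⊢; omega),
      plo_pos (show Cyc p a b by unfold Cyc at h1 h2 hc ⊢; omega),
      plo_pos (show Cyc p c d by unfold Cyc at h1 h2 hc ⊢; omega),
      plo_neg (show Cyc p d a by unfold Cyc at h1 h2 hc ⊢; omega),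
      plo_neg (show Cyc p c b by unfold Cyc at h1 h2 hc ⊢; omega)]
    linear_combination -pl_rel p a b c d
  · rw [plo_pos (show Cyc p a c by unfold Cyc at h1 h2 hc ⊢; omega),
      plo_neg (show Cyc p d b by unfold Cyc at h1 h2 hc ⊢; omega),
      plo_pos (show Cyc p a b by unfold Cyc at h1 h2 hc ⊢; omega),
      plo_neg (show Cyc p d c by unfold Cyc at h1 h2 hc ⊢; omega),
      plo_neg (show Cyc p d a by unfold Cyc at h1 h2 hc ⊢; omega),
      plo_pos (show Cyc p b c by unfold Cyc at h1 h2 hc ⊢; omega)]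
    linear_combination pl_rel p a b c d
  · rw [plo_pos (show Cyc p a c by unfold Cyc at h1 h2 hc ⊢; omega),
      plo_pos (show Cyc p b d by unfold Cyc at h1 h2 hc ⊢; omega),
      plo_pos (show Cyc p a b by unfold Cyc at h1 h2 hc ⊢; omega),
      plo_pos (show Cyc p c d by unfold Cyc at h1 h2 hc ⊢; omega),
      plo_pos (show Cyc p a d by unfold Cyc at h1 h2 hc ⊢; omega),
      plo_pos (show Cyc p b c by unfold Cyc at h1 h2 hc ⊢; omega)]
    linear_combination -pl_rel p a b c d

lemma card3_distinct {α : Type*} [DecidableEq α] {a b c : α}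
    (h : ({a, b, c} : Finset α).card = 3) : a ≠ b ∧ a ≠ c ∧ b ≠ c := by
  refine ⟨?_, ?_, ?_⟩ <;> rintro rfl
  · have hle : ({a, a, c} : Finset α).card ≤ ({a, c} : Finset α).card :=
      Finset.card_le_card (by intro t ht; simp at ht ⊢; tauto)
    have h2 := Finset.card_insert_le a ({c} : Finset α)
    simp at h2; omega
  · have hle : ({a, b, a} : Finset α).card ≤ ({a, b} : Finset α).card :=
      Finset.card_le_card (by intro t ht; simp at ht ⊢; tauto)
    have h2 := Finset.card_insert_le a ({b} : Finset α)
    simp at h2; omega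
  · have hle : ({a, b, b} : Finset α).card ≤ ({a, b} : Finset α).card :=
      Finset.card_le_card (by intro t ht; simp at ht ⊢; tauto)
    have h2 := Finset.card_insert_le a ({b} : Finset α)
    simp at h2; omega

end Aux

set_option maxHeartbeats 1000000 in
/-- Removing leaves: if `(F, v)` is unitary in `x`, `P` is a triangulation
point, `Q2` a leaf at `P` with `Q2 ∉ {x-2, x+2}`, and `Q1`, `Q3` the previous
and next neighbours of `P` (previous/next leaves, or the adjacent
triangulation points if no such leaves exist), then
`v({P,Q1,Q3}) = v({P,Q1,Q2}) + v({P,Q2,Q3})`. -/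
theorem removing_leaves {n : ℕ} [NeZero n] (F : Finset (Finset (Fin n)))
    (x : Fin n) (hF : MaxWS F)
    (v : GrassRing n →ₐ[ℂ] ℂ) (lam : ℂ) (hlam : lam ≠ 0)
    (hunit : ∀ a b c : Fin n, ({a, b, c} : Finset (Fin n)) ∈ Fx F x →
      v (Plo a b c) = lam)
    (P Q1 Q2 Q3 : Fin n)
    (hP : IsTriPoint F x P)
    (hQ2 : IsLeafAt F x Q2 P)
    (hQ2x : Q2 ≠ x - 2 ∧ Q2 ≠ x + 2)
    (hQ1 : ({x, P, Q1} : Finset (Fin n)) ∈ F ∧ Ltx x Q1 Q2 ∧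
      ∀ R : Fin n, ({x, P, R} : Finset (Fin n)) ∈ F → Ltx x Q1 R → ¬ Ltx x R Q2)
    (hQ3 : ({x, P, Q3} : Finset (Fin n)) ∈ F ∧ Ltx x Q2 Q3 ∧
      ∀ R : Fin n, ({x, P, R} : Finset (Fin n)) ∈ F → Ltx x Q2 R → ¬ Ltx x R Q3) :
    v (Plo P Q1 Q3) = v (Plo P Q1 Q2) + v (Plo P Q2 Q3) := by
  obtain ⟨hcard, -, -⟩ := hF
  obtain ⟨h1F, hlt12, -⟩ := hQ1
  obtain ⟨h3F, hlt23, -⟩ := hQ3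
  have h2F : ({x, P, Q2} : Finset (Fin n)) ∈ F := hQ2.2.2
  obtain ⟨hxP1, -, hPQ1⟩ := card3_distinct (hcard _ h1F)
  obtain ⟨-, -, hPQ2⟩ := card3_distinct (hcard _ h2F)
  obtain ⟨-, -, hPQ3⟩ := card3_distinct (hcard _ h3F)
  have hc1 : Cyc x Q1 Q2 := hlt12
  have hc2 : Cyc x Q2 Q3 := hlt23
  have key := plo_rel5 P x Q1 Q2 Q3 (fun h => hxP1 h.symm) (fun h => hPQ1 h)
    (fun h => hPQ2 h) (fun h => hPQ3 h) hc1 hc2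
  have hv := congrArg v key
  simp only [map_mul, map_add] at hv
  have hu1 : v (Plo P x Q1) = lam := by
    rw [show Plo P x Q1 = Plo x P Q1 from plo_comm1 P x Q1]
    exact hunit x P Q1 (by unfold Fx; exact Finset.mem_filter.mpr ⟨h1F, Finset.mem_insert_self _ _⟩)
  have hu2 : v (Plo P x Q2) = lam := by
    rw [show Plo P x Q2 = Plo x P Q2 from plo_comm1 P x Q2]
    exact hunit x P Q2 (by unfold Fx; exact Finset.mem_filter.mpr ⟨h2F, Finset.mem_insert_self _ _⟩)
  have hu3 : v (Plo P x Q3) = lam := by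
    rw [show Plo P x Q3 = Plo x P Q3 from plo_comm1 P x Q3]
    exact hunit x P Q3 (by unfold Fx; exact Finset.mem_filter.mpr ⟨h3F, Finset.mem_insert_self _ _⟩)
  rw [hu1, hu2, hu3] at hv
  apply mul_left_cancel₀ hlam
  rw [mul_add]
  linear_combination hv
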